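/- Let P^{Z2}_n(z) be defined by P^{Z2}_0 = 1, P^{Z2}_1 = 1+z, P^{Z2}_2 = (1+z)², and P^{Z2}_n = 2z P^{Z2}_{n-2} + (z+z²) P^{Z2}_{n-3} for n ≥ 3. Then P^{Z2}_n is palindromic of degree n: z^n P^{Z2}_n(1/z) = P^{Z2}_n(z) for all n ≥ 0. -/

import Mathlib

open Polynomial

private lemma aux0 (A B : Polynomial ℤ) : (2*X*A + (X+X^2)*B).coeff 0 = 0 := by
  have h : 2*X*A + (X+X^2)*B = X*(2*A + B) + X*(X*B) := by ring
  simp [h, mul_coeff_zero]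

private lemma aux1 (A B : Polynomial ℤ) : (2*X*A + (X+X^2)*B).coeff 1 = 2*A.coeff 0 + B.coeff 0 := by
  have h : 2*X*A + (X+X^2)*B = X*(2*A + B) + X*(X*B) := by ring
  rw [h, coeff_add]
  rw [show ((X:ℤ[X]) * (2 * A + B)).coeff 1 = (2*A+B).coeff 0 from coeff_X_mul (2*A+B) 0,
    show ((X:ℤ[X]) * ((X:ℤ[X]) * B)).coeff 1 = ((X:ℤ[X])*B).coeff 0 from coeff_X_mul ((X:ℤ[X])*B) 0]
  simp [mul_coeff_zero, two_mul, coeff_add]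

private lemma aux2 (A B : Polynomial ℤ) (k : ℕ) :
    (2*X*A + (X+X^2)*B).coeff (k+2) = 2*A.coeff (k+1) + B.coeff (k+1) + B.coeff k := by
  have h : 2*X*A + (X+X^2)*B = X*(2*A + B) + X*(X*B) := by ring
  rw [h, coeff_add, show k+2 = (k+1)+1 from rfl, coeff_X_mul, coeff_X_mul, coeff_X_mul]
  rw [coeff_add]
  rw [show (2*A).coeff (k+1) = 2*A.coeff (k+1) from by rw [two_mul, coeff_add]; ring]

private lemma degbound (P : ℕ → Polynomial ℤ)
    (h0 : P 0 = 1) (h1 : P 1 = 1 + X) (h2 : P 2 = (1 + X)^2)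
    (hrec : ∀ n, 3 ≤ n → P n = 2*X * P (n-2) + (X + X^2) * P (n-3)) :
    ∀ n j, n < j → (P n).coeff j = 0 := by
  intro n
  induction n using Nat.strong_induction_on with
  | _ n ih =>
    match n with
    | 0 => intro j hj; rw [h0]; simp [coeff_one]; omega
    | 1 => intro j hj
           rw [h1, coeff_add, coeff_one, coeff_X]
           have : j ≠ 0 := by omega
           have : j ≠ 1 := by omega
           simp_all; omega
    | 2 => intro j hj
           rw [h2, show ((1:Polynomial ℤ)+X)^2 = 1 + 2*X + X^2 from by ring]
           rw [coeff_add, coeff_add, coeff_one, coeff_X_pow]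
           rw [show ((2:Polynomial ℤ)*X) = X + X from by ring, coeff_add, coeff_X]
           have : j ≠ 0 := by omega
           have : j ≠ 1 := by omega
           have : j ≠ 2 := by omega
           simp_all; omega
    | (m+3) =>
      intro j hj
      rw [hrec (m+3) (by omega)]
      have e2 : m + 3 - 2 = m + 1 := by omega
      have e3 : m + 3 - 3 = m := by omega
      rw [e2, e3]
      obtain ⟨j', rfl⟩ : ∃ j', j = j' + 2 := ⟨j - 2, by omega⟩
      rw [aux2]
      rw [ih (m+1) (by omega) (j'+1) (by omega), ih m (by omega) (j'+1) (by omega),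
          ih m (by omega) j' (by omega)]
      ring

private lemma sym (P : ℕ → Polynomial ℤ)
    (h0 : P 0 = 1) (h1 : P 1 = 1 + X) (h2 : P 2 = (1 + X)^2)
    (hrec : ∀ n, 3 ≤ n → P n = 2*X * P (n-2) + (X + X^2) * P (n-3)) :
    ∀ n k j, k + j = n → (P n).coeff k = (P n).coeff j := by
  have hd := degbound P h0 h1 h2 hrec
  intro n
  induction n using Nat.strong_induction_on with
  | _ n ih =>
    match n with
    | 0 => intro k j hkj
           obtain ⟨rfl, rfl⟩ : k = 0 ∧ j = 0 := by omega
           rfl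
    | 1 => intro k j hkj
           rcases (by omega : k = 0 ∧ j = 1 ∨ k = 1 ∧ j = 0) with ⟨rfl, rfl⟩ | ⟨rfl, rfl⟩ <;>
             simp [h1, coeff_add, coeff_one, coeff_X]
    | 2 => intro k j hkj
           have e : ((1:Polynomial ℤ)+X)^2 = 1 + (X + X) + X^2 := by ring
           rcases (by omega : k = 0 ∧ j = 2 ∨ k = 1 ∧ j = 1 ∨ k = 2 ∧ j = 0) with
             ⟨rfl, rfl⟩ | ⟨rfl, rfl⟩ | ⟨rfl, rfl⟩ <;>
             simp [h2, e, coeff_add, coeff_one, coeff_X, coeff_X_pow]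
    | (m+3) =>
      intro k j hkj
      rw [hrec (m+3) (by omega), show m + 3 - 2 = m + 1 from by omega,
          show m + 3 - 3 = m from by omega]
      have hend : ∀ i, i + 1 = m + 3 →
          (2*X*P (m+1) + (X+X^2)*(P m)).coeff i = 2*(P (m+1)).coeff 0 + (P m).coeff 0 := by
        intro i hi
        obtain ⟨i', rfl⟩ : ∃ i', i = i' + 2 := ⟨i - 2, by omega⟩
        rw [aux2, ih (m+1) (by omega) (i'+1) 0 (by omega), hd m (i'+1) (by omega),
            ih m (by omega) i' 0 (by omega)]
        ring
      have htop : (2*X*P (m+1) + (X+X^2)*(P m)).coeff (m+3) = 0 := by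
        rw [show m+3 = (m+1)+2 from by omega, aux2, hd (m+1) (m+2) (by omega),
            hd m (m+2) (by omega), hd m (m+1) (by omega)]
        ring
      rcases (by omega : (k = 0 ∧ j = m+3) ∨ (j = 0 ∧ k = m+3) ∨ (k = 1 ∧ j + 1 = m + 3) ∨
          (j = 1 ∧ k + 1 = m + 3) ∨ (2 ≤ k ∧ 2 ≤ j)) with
        ⟨rfl, rfl⟩ | ⟨rfl, rfl⟩ | ⟨rfl, hj⟩ | ⟨rfl, hk⟩ | ⟨hk, hj⟩
      · rw [aux0, htop]
      · rw [aux0, htop]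
      · rw [aux1, hend j hj]
      · rw [aux1, hend k hk]
      · obtain ⟨k', rfl⟩ : ∃ k', k = k' + 2 := ⟨k - 2, by omega⟩
        obtain ⟨j', rfl⟩ : ∃ j', j = j' + 2 := ⟨j - 2, by omega⟩
        rw [aux2, aux2]
        rw [ih (m+1) (by omega) (k'+1) (j'+1) (by omega),
            ih m (by omega) (k'+1) j' (by omega),
            ih m (by omega) k' (j'+1) (by omega)]
        ring

theorem z2_poly_palindromic (P : ℕ → Polynomial ℤ)
    (h0 : P 0 = 1)
    (h1 : P 1 = 1 + X)
    (h2 : P 2 = (1 + X)^2)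
    (hrec : ∀ n, 3 ≤ n → P n = 2*X * P (n-2) + (X + X^2) * P (n-3)) :
    ∀ n, ∀ k, k ≤ n → (P n).coeff k = (P n).coeff (n-k) := by
  intro n k hk
  exact sym P h0 h1 h2 hrec n k (n-k) (by omega)
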